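/- arXiv:2605.30520 — 5 statements merged into one kernel-verified Lean document; each statement's English description precedes it below -/
import Mathlib

section
/- Let n ≥ 1 and let l_0,...,l_{n-1} and m_0,...,m_{n-1} be real numbers in [0,1]. Then 1 - ∏_{i=0}^{n-1}(l_i + m_i - l_i·m_i) ≤ (1 - ∏_{i=0}^{n-1} l_i)·(1 - ∏_{i=0}^{n-1} m_i). -/
lemma key_aux (n : ℕ) (l m : ℕ → ℝ)
    (hl : ∀ i < n, l i ∈ Set.Icc (0:ℝ) 1) (hm : ∀ i < n, m i ∈ Set.Icc (0:ℝ) 1) :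
    (∏ i ∈ Finset.range n, l i) + (∏ i ∈ Finset.range n, m i)
      - (∏ i ∈ Finset.range n, l i) * (∏ i ∈ Finset.range n, m i)
      ≤ ∏ i ∈ Finset.range n, (l i + m i - l i * m i) := by
  induction n with
  | zero => simp
  | succ k ih =>
    have hl' : ∀ i < k, l i ∈ Set.Icc (0:ℝ) 1 := fun i hi => hl i (by omega)
    have hm' : ∀ i < k, m i ∈ Set.Icc (0:ℝ) 1 := fun i hi => hm i (by omega)
    have ih' := ih hl' hm'
    set A := ∏ i ∈ Finset.range k, l i with hA
    set B := ∏ i ∈ Finset.range k, m i with hB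
    have hA0 : 0 ≤ A := Finset.prod_nonneg (fun i hi => (hl' i (Finset.mem_range.mp hi)).1)
    have hA1 : A ≤ 1 := Finset.prod_le_one (fun i hi => (hl' i (Finset.mem_range.mp hi)).1)
      (fun i hi => (hl' i (Finset.mem_range.mp hi)).2)
    have hB0 : 0 ≤ B := Finset.prod_nonneg (fun i hi => (hm' i (Finset.mem_range.mp hi)).1)
    have hB1 : B ≤ 1 := Finset.prod_le_one (fun i hi => (hm' i (Finset.mem_range.mp hi)).1)
      (fun i hi => (hm' i (Finset.mem_range.mp hi)).2)
    have hlk := hl k (by omega)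
    have hmk := hm k (by omega)
    obtain ⟨hl0, hl1⟩ := hlk
    obtain ⟨hm0, hm1⟩ := hmk
    rw [Finset.prod_range_succ, Finset.prod_range_succ, Finset.prod_range_succ,
      ← hA, ← hB]
    have hfac : (0:ℝ) ≤ l k + m k - l k * m k := by nlinarith
    have step : A * l k + B * m k - (A * l k) * (B * m k)
        ≤ (A + B - A * B) * (l k + m k - l k * m k) := by
      nlinarith [mul_nonneg (mul_nonneg hA0 hm0) (mul_nonneg (sub_nonneg.mpr hB1) (sub_nonneg.mpr hl1)),
        mul_nonneg (mul_nonneg hB0 hl0) (mul_nonneg (sub_nonneg.mpr hA1) (sub_nonneg.mpr hm1))]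
    calc A * l k + B * m k - A * l k * (B * m k)
        ≤ (A + B - A * B) * (l k + m k - l k * m k) := step
      _ ≤ (∏ i ∈ Finset.range k, (l i + m i - l i * m i)) * (l k + m k - l k * m k) := by
          exact mul_le_mul_of_nonneg_right ih' hfac

theorem stmt_0 (n : ℕ) (hn : 1 ≤ n) (l m : ℕ → ℝ)
    (hl : ∀ i < n, l i ∈ Set.Icc (0:ℝ) 1) (hm : ∀ i < n, m i ∈ Set.Icc (0:ℝ) 1) :
    1 - ∏ i ∈ Finset.range n, (l i + m i - l i * m i) ≤
      (1 - ∏ i ∈ Finset.range n, l i) * (1 - ∏ i ∈ Finset.range n, m i) := by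
  have h := key_aux n l m hl hm
  nlinarith [h]
end

section
/- Let n ≥ 1 and let r_0^sc,...,r_{n-1}^sc and r_0^ca,...,r_{n-1}^ca be real numbers in [0,1]. Define r^1P = 1 - ∏_{i=0}^{n-1}(1 - r_i^sc·r_i^ca) and r^2P = (1 - ∏_{i=0}^{n-1}(1 - r_i^sc))·(1 - ∏_{i=0}^{n-1}(1 - r_i^ca)). Then r^2P ≥ r^1P. -/
lemma key_or_prod (n : ℕ) (x y : ℕ → ℝ)
    (hx : ∀ i < n, x i ∈ Set.Icc (0:ℝ) 1) (hy : ∀ i < n, y i ∈ Set.Icc (0:ℝ) 1) :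
    (∏ i ∈ Finset.range n, x i) + (∏ i ∈ Finset.range n, y i)
      - (∏ i ∈ Finset.range n, x i) * (∏ i ∈ Finset.range n, y i)
      ≤ ∏ i ∈ Finset.range n, (x i + y i - x i * y i) := by
  induction n with
  | zero => simp
  | succ n ih =>
    have hx' : ∀ i < n, x i ∈ Set.Icc (0:ℝ) 1 := fun i hi => hx i (hi.trans (Nat.lt_succ_self n))
    have hy' : ∀ i < n, y i ∈ Set.Icc (0:ℝ) 1 := fun i hi => hy i (hi.trans (Nat.lt_succ_self n))
    have ih' := ih hx' hy'
    set X := ∏ i ∈ Finset.range n, x i with hXdef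
    set Y := ∏ i ∈ Finset.range n, y i with hYdef
    have hX0 : 0 ≤ X := Finset.prod_nonneg fun i hi => (hx' i (Finset.mem_range.mp hi)).1
    have hX1 : X ≤ 1 := Finset.prod_le_one
      (fun i hi => (hx' i (Finset.mem_range.mp hi)).1)
      (fun i hi => (hx' i (Finset.mem_range.mp hi)).2)
    have hY0 : 0 ≤ Y := Finset.prod_nonneg fun i hi => (hy' i (Finset.mem_range.mp hi)).1
    have hY1 : Y ≤ 1 := Finset.prod_le_one
      (fun i hi => (hy' i (Finset.mem_range.mp hi)).1)
      (fun i hi => (hy' i (Finset.mem_range.mp hi)).2)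
    obtain ⟨hxn0, hxn1⟩ := hx n (Nat.lt_succ_self n)
    obtain ⟨hyn0, hyn1⟩ := hy n (Nat.lt_succ_self n)
    rw [Finset.prod_range_succ, Finset.prod_range_succ, Finset.prod_range_succ]
    have h1 : 0 ≤ X * y n * (1 - x n) * (1 - Y) := by
      apply mul_nonneg (mul_nonneg (mul_nonneg hX0 hyn0) (by linarith)) (by linarith)
    have h2 : 0 ≤ Y * x n * (1 - y n) * (1 - X) := by
      apply mul_nonneg (mul_nonneg (mul_nonneg hY0 hxn0) (by linarith)) (by linarith)
    have hxy : 0 ≤ x n + y n - x n * y n := by nlinarith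
    have h3 : 0 ≤ ((∏ i ∈ Finset.range n, (x i + y i - x i * y i)) - (X + Y - X * Y))
        * (x n + y n - x n * y n) := mul_nonneg (by linarith) hxy
    nlinarith [h1, h2, h3]

theorem stmt_1 (n : ℕ) (hn : 1 ≤ n) (rsc rca : ℕ → ℝ)
    (hsc : ∀ i < n, rsc i ∈ Set.Icc (0:ℝ) 1) (hca : ∀ i < n, rca i ∈ Set.Icc (0:ℝ) 1) :
    1 - ∏ i ∈ Finset.range n, (1 - rsc i * rca i) ≤
      (1 - ∏ i ∈ Finset.range n, (1 - rsc i)) * (1 - ∏ i ∈ Finset.range n, (1 - rca i)) := by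
  have hx : ∀ i < n, (1 - rsc i) ∈ Set.Icc (0:ℝ) 1 := by
    intro i hi; obtain ⟨h1, h2⟩ := hsc i hi; constructor <;> [linarith; linarith]
  have hy : ∀ i < n, (1 - rca i) ∈ Set.Icc (0:ℝ) 1 := by
    intro i hi; obtain ⟨h1, h2⟩ := hca i hi; constructor <;> [linarith; linarith]
  have hkey := key_or_prod n (fun i => 1 - rsc i) (fun i => 1 - rca i) hx hy
  have hprod : ∏ i ∈ Finset.range n, (1 - rsc i * rca i)
      = ∏ i ∈ Finset.range n, ((1 - rsc i) + (1 - rca i) - (1 - rsc i) * (1 - rca i)) := by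
    apply Finset.prod_congr rfl; intro i _; ring
  rw [hprod]
  nlinarith [hkey]
end

section
/- For all real r in [0,1] and all natural numbers n ≥ 1, [1 - (1-r)^n]^2 ≥ 1 - (1 - r^2)^n. -/
theorem stmt_2 (r : ℝ) (hr : r ∈ Set.Icc (0:ℝ) 1) (n : ℕ) (hn : 1 ≤ n) :
    (1 - (1 - r) ^ n) ^ 2 ≥ 1 - (1 - r ^ 2) ^ n := by
  obtain ⟨h0, h1⟩ := hr
  have hb1 : (1:ℝ) + n * r ≤ (1 + r) ^ n := by
    have := one_add_mul_le_pow (by linarith : (-2:ℝ) ≤ r) n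
    linarith
  have hb2 : (1:ℝ) - n * r ≤ (1 - r) ^ n := by
    have h := one_add_mul_le_pow (by linarith : (-2:ℝ) ≤ -r) n
    have e : ((1:ℝ) + -r) = 1 - r := by ring
    rw [e] at h
    linarith
  have hs : (0:ℝ) ≤ (1 - r) ^ n := pow_nonneg (by linarith) n
  have hmul : (1 - r) ^ n * (1 + r) ^ n = (1 - r ^ 2) ^ n := by
    rw [← mul_pow]; ring_nf
  have key : (0:ℝ) ≤ (1 - r) ^ n * ((1 + r) ^ n - (2 - (1 - r) ^ n)) :=
    mul_nonneg hs (by linarith)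
  nlinarith [key, hmul]
end

section
/- Let n ≥ 1, and for each i let l_i, m_i ∈ [0,1]. Define c^1P = -∏_{i=0}^{n-1}(l_i + m_i - l_i m_i) and c^2P = -∏_{i=0}^{n-1} l_i - ∏_{i=0}^{n-1} m_i + ∏_{i=0}^{n-1} l_i m_i. Then c^1P ≤ c^2P. -/
theorem stmt_6 (n : ℕ) (hn : 1 ≤ n) (l m : ℕ → ℝ)
    (hl : ∀ i < n, l i ∈ Set.Icc (0:ℝ) 1) (hm : ∀ i < n, m i ∈ Set.Icc (0:ℝ) 1) :
    -∏ i ∈ Finset.range n, (l i + m i - l i * m i) ≤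
      -∏ i ∈ Finset.range n, l i - ∏ i ∈ Finset.range n, m i
        + ∏ i ∈ Finset.range n, (l i * m i) := by
  have key : ∀ N, (∀ i < N, l i ∈ Set.Icc (0:ℝ) 1) → (∀ i < N, m i ∈ Set.Icc (0:ℝ) 1) →
      (∏ i ∈ Finset.range N, l i) ∈ Set.Icc (0:ℝ) 1 ∧
      (∏ i ∈ Finset.range N, m i) ∈ Set.Icc (0:ℝ) 1 ∧
      (∏ i ∈ Finset.range N, l i) + (∏ i ∈ Finset.range N, m i)
        - (∏ i ∈ Finset.range N, l i) * (∏ i ∈ Finset.range N, m i)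
        ≤ ∏ i ∈ Finset.range N, (l i + m i - l i * m i) := by
    intro N
    induction N with
    | zero => intro _ _; norm_num
    | succ k ih =>
      intro hl hm
      have hlk := hl k (Nat.lt_succ_self k)
      have hmk := hm k (Nat.lt_succ_self k)
      obtain ⟨hA, hB, hind⟩ := ih (fun i hi => hl i (hi.trans (Nat.lt_succ_self k)))
        (fun i hi => hm i (hi.trans (Nat.lt_succ_self k)))
      rw [Finset.prod_range_succ, Finset.prod_range_succ, Finset.prod_range_succ]
      set A := ∏ i ∈ Finset.range k, l i
      set B := ∏ i ∈ Finset.range k, m i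
      set P := ∏ i ∈ Finset.range k, (l i + m i - l i * m i)
      obtain ⟨hA0, hA1⟩ := hA; obtain ⟨hB0, hB1⟩ := hB
      obtain ⟨hl0, hl1⟩ := hlk; obtain ⟨hm0, hm1⟩ := hmk
      refine ⟨⟨mul_nonneg hA0 hl0, by nlinarith⟩,
        ⟨mul_nonneg hB0 hm0, by nlinarith⟩, ?_⟩
      have h2 : (0:ℝ) ≤ l k + m k - l k * m k := by nlinarith
      have h3 : (A + B - A*B) * (l k + m k - l k*m k) ≤ P * (l k + m k - l k*m k) :=
        mul_le_mul_of_nonneg_right hind h2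
      nlinarith [mul_nonneg (mul_nonneg (mul_nonneg (sub_nonneg.2 hA1) (sub_nonneg.2 hm1)) hl0) hB0,
        mul_nonneg (mul_nonneg (mul_nonneg (sub_nonneg.2 hB1) (sub_nonneg.2 hl1)) hm0) hA0]
  obtain ⟨_, _, h⟩ := key n hl hm
  have hprod : ∏ i ∈ Finset.range n, (l i * m i)
      = (∏ i ∈ Finset.range n, l i) * ∏ i ∈ Finset.range n, m i :=
    Finset.prod_mul_distrib
  linarith
end

section
/- Let q_1, q_2 ∈ [0,1] be the success probabilities of two independent phases, and suppose a transmission over a single path succeeds iff both phases succeed. For n independent identical paths, the probability that at least one path succeeds is 1 - (1 - q_1 q_2)^n, which is at most (1 - (1-q_1)^n)(1 - (1-q_2)^n). -/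
lemma aux18 (a b : ℝ) (ha0 : 0 ≤ a) (ha1 : a ≤ 1) (hb0 : 0 ≤ b) (hb1 : b ≤ 1) :
    ∀ n : ℕ, a ^ n + b ^ n - a ^ n * b ^ n ≤ (a + b - a * b) ^ n := by
  intro n
  induction n with
  | zero => norm_num
  | succ n ih =>
    have hf0 : 0 ≤ a + b - a * b := by nlinarith
    have han : 0 ≤ a ^ n := pow_nonneg ha0 n
    have hbn : 0 ≤ b ^ n := pow_nonneg hb0 n
    have han1 : a ^ n ≤ 1 := pow_le_one₀ ha0 ha1
    have hbn1 : b ^ n ≤ 1 := pow_le_one₀ hb0 hb1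
    have key : a ^ (n+1) + b ^ (n+1) - a ^ (n+1) * b ^ (n+1)
        ≤ (a + b - a * b) * (a ^ n + b ^ n - a ^ n * b ^ n) := by
      have h1 : 0 ≤ a * b ^ n * (1 - a ^ n) * (1 - b) :=
        mul_nonneg (mul_nonneg (mul_nonneg ha0 hbn) (by linarith)) (by linarith)
      have h2 : 0 ≤ a ^ n * b * (1 - b ^ n) * (1 - a) :=
        mul_nonneg (mul_nonneg (mul_nonneg han hb0) (by linarith)) (by linarith)
      ring_nf
      ring_nf at h1 h2
      nlinarith [h1, h2]
    calc a ^ (n+1) + b ^ (n+1) - a ^ (n+1) * b ^ (n+1)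
        ≤ (a + b - a * b) * (a ^ n + b ^ n - a ^ n * b ^ n) := key
      _ ≤ (a + b - a * b) * (a + b - a * b) ^ n := by
          exact mul_le_mul_of_nonneg_left ih hf0
      _ = (a + b - a * b) ^ (n+1) := by ring

theorem stmt_18 (q1 q2 : ℝ) (hq1 : q1 ∈ Set.Icc (0:ℝ) 1) (hq2 : q2 ∈ Set.Icc (0:ℝ) 1)
    (n : ℕ) :
    1 - (1 - q1 * q2) ^ n ≤ (1 - (1 - q1) ^ n) * (1 - (1 - q2) ^ n) := by
  obtain ⟨h1, h2⟩ := hq1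
  obtain ⟨h3, h4⟩ := hq2
  have := aux18 (1 - q1) (1 - q2) (by linarith) (by linarith) (by linarith) (by linarith) n
  have heq : (1 - q1) + (1 - q2) - (1 - q1) * (1 - q2) = 1 - q1 * q2 := by ring
  rw [heq] at this
  nlinarith [this]
end
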